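/- The density of an equal circle packing in a triangular torus whose contact graph is a triangle-rhombus strip tiling equals δ_Δ · (a+1)(n1² + n1·n2 + n2²)/c, where δ_Δ = π/√12, n = c(a+1) is the number of disks, and n1, n2 come from expressing the strip lattice in terms of the triangular lattice. -/

import Mathlib

open Complex

theorem strip_packing_density_formula
    (c a : ℕ) (hc : 0 < c) (b : ℤ) (n1 n2 n3 n4 : ℤ)
    (hdet : n1 * n4 - n2 * n3 = 1)
    (v g : ℂ) (hg_unit : ‖g‖ = 1) (hg_im : 0 < g.im)
    (hgen1 : (c : ℂ) = ((n1 : ℂ) + (n2 : ℂ) * Complex.exp (Real.pi / 3 * Complex.I)) * v)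
    (hgen2 : g + (a : ℂ) * Complex.exp (Real.pi / 3 * Complex.I) + (b : ℂ)
        = ((n3 : ℂ) + (n4 : ℂ) * Complex.exp (Real.pi / 3 * Complex.I)) * v)
    (n : ℕ) (hn : n = c * (a + 1)) :
    (n : ℝ) * Real.pi * (1 / 2) ^ 2 / ((g.im + (a : ℝ) * (Real.sqrt 3 / 2)) * c)
      = (Real.pi / Real.sqrt 12) *
          ((a + 1 : ℝ) * ((n1 ^ 2 + n1 * n2 + n2 ^ 2 : ℤ) : ℝ) / c) := by
  set w : ℂ := Complex.exp (Real.pi / 3 * Complex.I) with hw_def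
  have hs3 : Real.sqrt 3 ^ 2 = 3 := Real.sq_sqrt (by norm_num)
  have hs3pos : 0 < Real.sqrt 3 := Real.sqrt_pos.mpr (by norm_num)
  have hw : w = Complex.ofReal (1/2) + Complex.ofReal (Real.sqrt 3 / 2) * Complex.I := by
    rw [hw_def]
    have h : (Real.pi / 3 : ℂ) * Complex.I = ((Real.pi / 3 : ℝ) : ℂ) * Complex.I := by
      push_cast; ring
    rw [h, Complex.exp_mul_I, ← Complex.ofReal_cos, ← Complex.ofReal_sin,
      Real.cos_pi_div_three, Real.sin_pi_div_three]
  have h3c : ((Real.sqrt 3 : ℝ) : ℂ) ^ 2 = 3 := by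
    rw [← Complex.ofReal_pow, hs3]; norm_num
  have hw2 : w ^ 2 = w - 1 := by
    rw [hw]; push_cast
    linear_combination (((Real.sqrt 3 : ℝ) : ℂ) ^ 2 / 4) * Complex.I_sq + (-1/4 : ℂ) * h3c
  have hdetC : (n1 : ℂ) * n4 - n2 * n3 = 1 := by exact_mod_cast hdet
  have h1 : ((n1 : ℂ) + n2 * w) * (g + a * w + b) = ((n3 : ℂ) + n4 * w) * c := by
    rw [hgen1, hgen2]; ring
  have key : ((n1 : ℂ) ^ 2 + n1 * n2 + n2 ^ 2) * (g + a * w + b)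
      = (c : ℂ) * (((n1 * n3 + n2 * n3 + n2 * n4 : ℤ) : ℂ) + w) := by
    push_cast
    linear_combination ((n1 : ℂ) + n2 - n2 * w) * h1
      + ((n2 : ℂ) ^ 2 * (g + (a : ℂ) * w + b) - c * n2 * n4) * hw2 + (c : ℂ) * w * hdetC
  rw [hw] at key
  have him0 := congrArg Complex.im key
  simp [Complex.add_im, Complex.mul_im, Complex.mul_re, Complex.add_re] at him0
  have e1 : ((n1:ℂ)^2).re = (n1:ℝ)^2 := by norm_cast
  have e2 : ((n2:ℂ)^2).re = (n2:ℝ)^2 := by norm_cast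
  have e3 : ((n1:ℂ)^2).im = 0 := by norm_cast
  have e4 : ((n2:ℂ)^2).im = 0 := by norm_cast
  rw [e1, e2, e3, e4] at him0
  have him : ((n1:ℝ)^2 + n1*n2 + n2^2) * (g.im + (a : ℝ) * (Real.sqrt 3 / 2))
      = c * (Real.sqrt 3 / 2) := by
    push_cast at him0
    linarith [him0]
  have harea_pos : 0 < g.im + (a : ℝ) * (Real.sqrt 3 / 2) := by positivity
  have hcpos : (0 : ℝ) < c := by exact_mod_cast hc
  have hSpos : (0:ℝ) < (n1:ℝ)^2 + n1*n2 + n2^2 := by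
    nlinarith [him, harea_pos, mul_pos hcpos (by positivity : (0:ℝ) < Real.sqrt 3 / 2)]
  have h12 : Real.sqrt 12 = 2 * Real.sqrt 3 := by
    rw [show (12 : ℝ) = 2 ^ 2 * 3 by norm_num, Real.sqrt_mul (by positivity),
      Real.sqrt_sq (by norm_num)]
  have harea : g.im + (a : ℝ) * (Real.sqrt 3 / 2)
      = c * (Real.sqrt 3 / 2) / ((n1:ℝ)^2 + n1*n2 + n2^2) := by
    rw [eq_div_iff (ne_of_gt hSpos)]; linarith [him]
  rw [hn, h12]
  push_cast
  rw [harea]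
  field_simp
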